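/- Assume φ₋ > φ₊, so that ρ₋ > ρ₊. The initial value problem ρ̄'(x) = 𝒟(ρ̄(x)) for x > 0 with ρ̄(0) = ρ₋ has a unique solution ρ̄ defined on all of [0,∞); it satisfies ρ₊ < ρ̄(x) ≤ ρ₋ and ρ̄'(x) < 0 for all x > 0, and ρ̄(x) → ρ₊ as x → +∞. -/

import Mathlib

open MeasureTheory Set Filter Topology

noncomputable section

/-- `F(s) = ∫_{ρ₊}^s p'(τ)/(μ τ) dτ`. -/
def Ffun (p : ℝ → ℝ) (μ ρp s : ℝ) : ℝ :=
  ∫ τ in ρp..s, deriv p τ / (μ * τ)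

/-- `H(s) = b F(s) + b φ₊ - a s`. -/
def Hfun (p : ℝ → ℝ) (μ a b ρp φp s : ℝ) : ℝ :=
  b * Ffun p μ ρp s + b * φp - a * s

/-- `G(s) = ∫_{ρ₊}^s 2 F'(τ) H(τ) dτ`. -/
def Gfun (p : ℝ → ℝ) (μ a b ρp φp s : ℝ) : ℝ :=
  ∫ τ in ρp..s, 2 * (deriv p τ / (μ * τ)) * Hfun p μ a b ρp φp τ

/-- `𝒟(r) = -√(G(r)) / F'(r)` with `F'(r) = p'(r)/(μ r)`. -/
def Dfun (p : ℝ → ℝ) (μ a b ρp φp r : ℝ) : ℝ :=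
  - Real.sqrt (Gfun p μ a b ρp φp r) / (deriv p r / (μ * r))

/-- The structural condition `φ₋ - φ₊ + ∫₀^{ρ₊} p'(s)/(μ s) ds > 0`. -/
def CondPlus (p : ℝ → ℝ) (μ ρp φp φm : ℝ) : Prop :=
  ¬ IntegrableOn (fun s => deriv p s / (μ * s)) (Set.Ioo 0 ρp) ∨
    0 < φm - φp + ∫ s in Set.Ioo 0 ρp, deriv p s / (μ * s)

namespace Stmt19

open intervalIntegral

variable {p : ℝ → ℝ} {μ a b ρp φp : ℝ}


variable {p : ℝ → ℝ} {μ a b ρp φp : ℝ}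

lemma gpos (hμ : 0 < μ) (ha : 0 < a) (hb : 0 < b)
    (hp' : ∀ ρ : ℝ, 0 < ρ → a * μ / b * ρ < deriv p ρ) {s : ℝ} (hs : 0 < s) :
    0 < deriv p s / (μ * s) := by
  have h1 : 0 < a * μ / b * s := by positivity
  exact div_pos (h1.trans (hp' s hs)) (by positivity)

lemma gb (hμ : 0 < μ) (ha : 0 < a) (hb : 0 < b)
    (hp' : ∀ ρ : ℝ, 0 < ρ → a * μ / b * ρ < deriv p ρ) {s : ℝ} (hs : 0 < s) :
    a < b * (deriv p s / (μ * s)) := by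
  have h := hp' s hs
  rw [mul_div_assoc' b, lt_div_iff₀ (by positivity : (0:ℝ) < μ * s)]
  have h2 : a * μ / b * s * b = a * (μ * s) := by field_simp
  linarith [mul_lt_mul_of_pos_right h hb]

lemma gcont (hμ : 0 < μ) (hp3 : ContDiffOn ℝ 3 p (Set.Ioi 0)) :
    ContinuousOn (fun s => deriv p s / (μ * s)) (Set.Ioi 0) := by
  have h1 : ContinuousOn (deriv p) (Set.Ioi 0) :=
    hp3.continuousOn_deriv_of_isOpen isOpen_Ioi (by norm_num)
  exact h1.div (continuousOn_const.mul continuousOn_id) fun s hs => by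
    have : (0:ℝ) < s := hs
    positivity

lemma ginteg (hμ : 0 < μ) (hp3 : ContDiffOn ℝ 3 p (Set.Ioi 0)) {x y : ℝ}
    (hx : 0 < x) (hy : 0 < y) :
    IntervalIntegrable (fun s => deriv p s / (μ * s)) volume x y :=
  ((gcont hμ hp3).mono (by
    intro t ht
    have h1 : min x y ≤ t := (Set.mem_uIcc.1 ht).elim (fun h => le_trans (min_le_left _ _) h.1)
      (fun h => le_trans (min_le_right _ _) h.1)
    exact lt_of_lt_of_le (lt_min hx hy) h1)).intervalIntegrable

lemma hasDerivF (hμ : 0 < μ) (hp3 : ContDiffOn ℝ 3 p (Set.Ioi 0)) (hρp : 0 < ρp)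
    {s : ℝ} (hs : 0 < s) :
    HasDerivAt (Ffun p μ ρp) (deriv p s / (μ * s)) s := by
  apply intervalIntegral.integral_hasDerivAt_right (ginteg hμ hp3 hρp hs)
  · exact ContinuousOn.stronglyMeasurableAtFilter isOpen_Ioi (gcont hμ hp3) s hs
  · exact (gcont hμ hp3).continuousAt (Ioi_mem_nhds hs)

lemma Fcont (hμ : 0 < μ) (hp3 : ContDiffOn ℝ 3 p (Set.Ioi 0)) (hρp : 0 < ρp) :
    ContinuousOn (Ffun p μ ρp) (Set.Ioi 0) := fun s hs =>
  ((hasDerivF hμ hp3 hρp hs).continuousAt).continuousWithinAt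

lemma Fmono (hμ : 0 < μ) (ha : 0 < a) (hb : 0 < b)
    (hp3 : ContDiffOn ℝ 3 p (Set.Ioi 0))
    (hp' : ∀ ρ : ℝ, 0 < ρ → a * μ / b * ρ < deriv p ρ) (hρp : 0 < ρp) :
    StrictMonoOn (Ffun p μ ρp) (Set.Ioi 0) := by
  apply strictMonoOn_of_deriv_pos (convex_Ioi 0) (Fcont hμ hp3 hρp)
  intro x hx
  rw [interior_Ioi] at hx
  rw [(hasDerivF hμ hp3 hρp hx).deriv]
  exact gpos hμ ha hb hp' hx

lemma hasDerivH (hμ : 0 < μ) (hp3 : ContDiffOn ℝ 3 p (Set.Ioi 0)) (hρp : 0 < ρp)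
    {s : ℝ} (hs : 0 < s) :
    HasDerivAt (Hfun p μ a b ρp φp) (b * (deriv p s / (μ * s)) - a) s := by
  unfold Hfun
  have h2 : HasDerivAt (fun s => a * s) (a * 1) s := (hasDerivAt_id s).const_mul a
  have h3 := (((hasDerivF hμ hp3 hρp hs).const_mul b).add_const (b * φp)).sub h2
  rw [mul_one] at h3
  exact h3

lemma Hcont (hμ : 0 < μ) (hp3 : ContDiffOn ℝ 3 p (Set.Ioi 0)) (hρp : 0 < ρp) :
    ContinuousOn (Hfun p μ a b ρp φp) (Set.Ioi 0) := fun s hs =>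
  ((hasDerivH hμ hp3 hρp hs).continuousAt).continuousWithinAt

lemma Hρp (hcomp : a * ρp = b * φp) : Hfun p μ a b ρp φp ρp = 0 := by
  unfold Hfun Ffun
  rw [intervalIntegral.integral_same]
  linarith

lemma Hpos (hμ : 0 < μ) (ha : 0 < a) (hb : 0 < b)
    (hp3 : ContDiffOn ℝ 3 p (Set.Ioi 0))
    (hp' : ∀ ρ : ℝ, 0 < ρ → a * μ / b * ρ < deriv p ρ) (hρp : 0 < ρp)
    (hcomp : a * ρp = b * φp) {s : ℝ} (hs : ρp < s) :
    0 < Hfun p μ a b ρp φp s := by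
  have hmono : StrictMonoOn (Hfun p μ a b ρp φp) (Set.Ici ρp) := by
    apply strictMonoOn_of_deriv_pos (convex_Ici ρp)
      ((Hcont hμ hp3 hρp).mono (fun x hx => lt_of_lt_of_le hρp hx))
    intro x hx
    rw [interior_Ici] at hx
    rw [(hasDerivH hμ hp3 hρp (hρp.trans hx)).deriv]
    have := gb hμ ha hb hp' (hρp.trans hx)
    linarith
  have := hmono (le_refl ρp : ρp ∈ Set.Ici ρp) (le_of_lt hs) hs
  rwa [Hρp hcomp] at this

lemma gHcont (hμ : 0 < μ) (hp3 : ContDiffOn ℝ 3 p (Set.Ioi 0)) (hρp : 0 < ρp) :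
    ContinuousOn (fun τ => 2 * (deriv p τ / (μ * τ)) * Hfun p μ a b ρp φp τ) (Set.Ioi 0) :=
  ((continuousOn_const.mul (gcont hμ hp3)).mul (Hcont hμ hp3 hρp))

lemma gHinteg (hμ : 0 < μ) (hp3 : ContDiffOn ℝ 3 p (Set.Ioi 0)) (hρp : 0 < ρp)
    {x y : ℝ} (hx : 0 < x) (hy : 0 < y) :
    IntervalIntegrable (fun τ => 2 * (deriv p τ / (μ * τ)) * Hfun p μ a b ρp φp τ) volume x y :=
  ((gHcont hμ hp3 hρp).mono (by
    intro t ht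
    have h1 : min x y ≤ t := (Set.mem_uIcc.1 ht).elim (fun h => le_trans (min_le_left _ _) h.1)
      (fun h => le_trans (min_le_right _ _) h.1)
    exact lt_of_lt_of_le (lt_min hx hy) h1)).intervalIntegrable

lemma hasDerivG (hμ : 0 < μ) (hp3 : ContDiffOn ℝ 3 p (Set.Ioi 0)) (hρp : 0 < ρp)
    {s : ℝ} (hs : 0 < s) :
    HasDerivAt (Gfun p μ a b ρp φp)
      (2 * (deriv p s / (μ * s)) * Hfun p μ a b ρp φp s) s := by
  apply intervalIntegral.integral_hasDerivAt_right (gHinteg hμ hp3 hρp hρp hs)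
  · exact ContinuousOn.stronglyMeasurableAtFilter isOpen_Ioi (gHcont hμ hp3 hρp) s hs
  · exact (gHcont hμ hp3 hρp).continuousAt (Ioi_mem_nhds hs)

lemma Gρp : Gfun p μ a b ρp φp ρp = 0 := intervalIntegral.integral_same

lemma Gpos (hμ : 0 < μ) (ha : 0 < a) (hb : 0 < b)
    (hp3 : ContDiffOn ℝ 3 p (Set.Ioi 0))
    (hp' : ∀ ρ : ℝ, 0 < ρ → a * μ / b * ρ < deriv p ρ) (hρp : 0 < ρp)
    (hcomp : a * ρp = b * φp) {s : ℝ} (hs : ρp < s) :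
    0 < Gfun p μ a b ρp φp s := by
  have hmono : StrictMonoOn (Gfun p μ a b ρp φp) (Set.Ici ρp) := by
    apply strictMonoOn_of_deriv_pos (convex_Ici ρp)
      (fun x hx => ((hasDerivG hμ hp3 hρp (lt_of_lt_of_le hρp hx)).continuousAt).continuousWithinAt)
    intro x hx
    rw [interior_Ici] at hx
    rw [(hasDerivG hμ hp3 hρp (hρp.trans hx)).deriv]
    have h1 := gpos hμ ha hb hp' (hρp.trans hx)
    have h2 := Hpos hμ ha hb hp3 hp' hρp hcomp hx
    positivity
  have := hmono (le_refl ρp : ρp ∈ Set.Ici ρp) (le_of_lt hs) hs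
  rwa [Gρp] at this


variable {ρm : ℝ}

/-- `ψ = F'/√G`, the integrand for the inverse function `X`. -/
def psif (p : ℝ → ℝ) (μ a b ρp φp : ℝ) : ℝ → ℝ :=
  fun τ => (deriv p τ / (μ * τ)) / Real.sqrt (Gfun p μ a b ρp φp τ)

/-- `X r = ∫_r^{ρm} ψ`, the inverse of the solution. -/
def Xfun (p : ℝ → ℝ) (μ a b ρp φp ρm r : ℝ) : ℝ :=
  -∫ τ in ρm..r, psif p μ a b ρp φp τ

lemma psicont (hμ : 0 < μ) (ha : 0 < a) (hb : 0 < b)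
    (hp3 : ContDiffOn ℝ 3 p (Set.Ioi 0))
    (hp' : ∀ ρ : ℝ, 0 < ρ → a * μ / b * ρ < deriv p ρ) (hρp : 0 < ρp)
    (hcomp : a * ρp = b * φp) :
    ContinuousOn (psif p μ a b ρp φp) (Set.Ioi ρp) := by
  have hsub : Set.Ioi ρp ⊆ Set.Ioi (0:ℝ) := fun x hx => hρp.trans hx
  apply ContinuousOn.div ((gcont hμ hp3).mono hsub)
  · exact Real.continuous_sqrt.comp_continuousOn
      ((fun x hx => ((hasDerivG hμ hp3 hρp (hρp.trans hx)).continuousAt).continuousWithinAt))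
  · intro x hx
    exact ne_of_gt (Real.sqrt_pos.2 (Gpos hμ ha hb hp3 hp' hρp hcomp hx))

lemma psipos (hμ : 0 < μ) (ha : 0 < a) (hb : 0 < b)
    (hp3 : ContDiffOn ℝ 3 p (Set.Ioi 0))
    (hp' : ∀ ρ : ℝ, 0 < ρ → a * μ / b * ρ < deriv p ρ) (hρp : 0 < ρp)
    (hcomp : a * ρp = b * φp) {s : ℝ} (hs : ρp < s) :
    0 < psif p μ a b ρp φp s :=
  div_pos (gpos hμ ha hb hp' (hρp.trans hs))
    (Real.sqrt_pos.2 (Gpos hμ ha hb hp3 hp' hρp hcomp hs))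

lemma psiinteg (hμ : 0 < μ) (ha : 0 < a) (hb : 0 < b)
    (hp3 : ContDiffOn ℝ 3 p (Set.Ioi 0))
    (hp' : ∀ ρ : ℝ, 0 < ρ → a * μ / b * ρ < deriv p ρ) (hρp : 0 < ρp)
    (hcomp : a * ρp = b * φp) {x y : ℝ} (hx : ρp < x) (hy : ρp < y) :
    IntervalIntegrable (psif p μ a b ρp φp) volume x y :=
  ((psicont hμ ha hb hp3 hp' hρp hcomp).mono (by
    intro t ht
    have h1 : min x y ≤ t := (Set.mem_uIcc.1 ht).elim (fun h => le_trans (min_le_left _ _) h.1)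
      (fun h => le_trans (min_le_right _ _) h.1)
    exact lt_of_lt_of_le (lt_min hx hy) h1)).intervalIntegrable

lemma hasDerivX (hμ : 0 < μ) (ha : 0 < a) (hb : 0 < b)
    (hp3 : ContDiffOn ℝ 3 p (Set.Ioi 0))
    (hp' : ∀ ρ : ℝ, 0 < ρ → a * μ / b * ρ < deriv p ρ) (hρp : 0 < ρp)
    (hcomp : a * ρp = b * φp) (hρpm : ρp < ρm) {r : ℝ} (hr : ρp < r) :
    HasDerivAt (Xfun p μ a b ρp φp ρm) (-(psif p μ a b ρp φp r)) r := by
  apply HasDerivAt.neg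
  apply intervalIntegral.integral_hasDerivAt_right
    (psiinteg hμ ha hb hp3 hp' hρp hcomp hρpm hr)
  · exact ContinuousOn.stronglyMeasurableAtFilter isOpen_Ioi
      (psicont hμ ha hb hp3 hp' hρp hcomp) r hr
  · exact (psicont hμ ha hb hp3 hp' hρp hcomp).continuousAt (Ioi_mem_nhds hr)

lemma Xρm : Xfun p μ a b ρp φp ρm ρm = 0 := by
  unfold Xfun; rw [intervalIntegral.integral_same]; ring

lemma Xanti (hμ : 0 < μ) (ha : 0 < a) (hb : 0 < b)
    (hp3 : ContDiffOn ℝ 3 p (Set.Ioi 0))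
    (hp' : ∀ ρ : ℝ, 0 < ρ → a * μ / b * ρ < deriv p ρ) (hρp : 0 < ρp)
    (hcomp : a * ρp = b * φp) (hρpm : ρp < ρm) :
    StrictAntiOn (Xfun p μ a b ρp φp ρm) (Set.Ioi ρp) := by
  apply strictAntiOn_of_deriv_neg (convex_Ioi ρp)
    (fun x hx => ((hasDerivX hμ ha hb hp3 hp' hρp hcomp hρpm hx).continuousAt).continuousWithinAt)
  intro x hx
  rw [interior_Ioi] at hx
  rw [(hasDerivX hμ ha hb hp3 hp' hρp hcomp hρpm hx).deriv]
  exact neg_neg_iff_pos.2 (psipos hμ ha hb hp3 hp' hρp hcomp hx)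


lemma Gquad (hμ : 0 < μ) (ha : 0 < a) (hb : 0 < b)
    (hp3 : ContDiffOn ℝ 3 p (Set.Ioi 0))
    (hp' : ∀ ρ : ℝ, 0 < ρ → a * μ / b * ρ < deriv p ρ) (hρp : 0 < ρp)
    (hcomp : a * ρp = b * φp) (hρpm : ρp < ρm) :
    ∃ Cq m : ℝ, 0 < Cq ∧ 0 < m ∧
      (∀ s ∈ Set.Icc ρp ρm, Gfun p μ a b ρp φp s ≤ Cq * (s - ρp)^2) ∧
      (∀ s ∈ Set.Icc ρp ρm, m ≤ deriv p s / (μ * s)) := by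
  set g : ℝ → ℝ := fun s => deriv p s / (μ * s) with hg
  have hKsub : Set.Icc ρp ρm ⊆ Set.Ioi (0:ℝ) := fun x hx => lt_of_lt_of_le hρp hx.1
  have hgK : ContinuousOn g (Set.Icc ρp ρm) := (gcont hμ hp3).mono hKsub
  have hne : (Set.Icc ρp ρm).Nonempty := ⟨ρp, le_refl _, hρpm.le⟩
  obtain ⟨x₀, hx₀K, hx₀⟩ := isCompact_Icc.exists_isMaxOn hne hgK
  obtain ⟨x₁, hx₁K, hx₁⟩ := isCompact_Icc.exists_isMinOn hne hgK
  set Cg : ℝ := g x₀ with hCg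
  set m : ℝ := g x₁ with hm
  have hCgpos : 0 < Cg := gpos hμ ha hb hp' (hKsub hx₀K)
  have hmpos : 0 < m := gpos hμ ha hb hp' (hKsub hx₁K)
  have hgle : ∀ x ∈ Set.Icc ρp ρm, g x ≤ Cg := fun x hx => hx₀ hx
  have hgge : ∀ x ∈ Set.Icc ρp ρm, m ≤ g x := fun x hx => hx₁ hx
  set L : ℝ := b * Cg - a with hL
  have hLpos : 0 < L := by
    have h1 := gb hμ ha hb hp' hρp
    have h2 : g ρp ≤ Cg := hgle ρp ⟨le_refl _, hρpm.le⟩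
    have : b * g ρp ≤ b * Cg := mul_le_mul_of_nonneg_left h2 hb.le
    simp only [hL]; linarith
  -- H τ ≤ L (τ - ρp) on Icc ρp ρm
  have hHbound : ∀ τ ∈ Set.Icc ρp ρm, Hfun p μ a b ρp φp τ ≤ L * (τ - ρp) := by
    intro τ hτ
    have hτ0 : ∀ x ∈ Set.uIcc ρp τ, HasDerivAt (Hfun p μ a b ρp φp) (b * g x - a) x := by
      intro x hx
      rw [Set.uIcc_of_le hτ.1] at hx
      exact hasDerivH hμ hp3 hρp (lt_of_lt_of_le hρp hx.1)
    have hint : IntervalIntegrable (fun x => b * g x - a) volume ρp τ := by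
      apply ContinuousOn.intervalIntegrable
      rw [Set.uIcc_of_le hτ.1]
      exact ((continuousOn_const.mul ((gcont hμ hp3).mono (fun x hx =>
        lt_of_lt_of_le hρp hx.1))).sub continuousOn_const)
    have hftc := intervalIntegral.integral_eq_sub_of_hasDerivAt hτ0 hint
    have hmono : (∫ x in ρp..τ, (b * g x - a)) ≤ ∫ _x in ρp..τ, L := by
      apply intervalIntegral.integral_mono_on hτ.1 hint intervalIntegrable_const
      intro x hx
      have : g x ≤ Cg := hgle x ⟨hx.1, hx.2.trans hτ.2⟩
      have : b * g x ≤ b * Cg := mul_le_mul_of_nonneg_left this hb.le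
      simp only [hL]; linarith
    rw [intervalIntegral.integral_const, smul_eq_mul] at hmono
    rw [Hρp hcomp] at hftc
    linarith [hftc, hmono]
  refine ⟨Cg * L, m, by positivity, hmpos, ?_, hgge⟩
  intro s hs
  have hGs : Gfun p μ a b ρp φp s = ∫ τ in ρp..s, 2 * g τ * Hfun p μ a b ρp φp τ := rfl
  have hintL : IntervalIntegrable (fun τ => 2 * g τ * Hfun p μ a b ρp φp τ) volume ρp s :=
    gHinteg hμ hp3 hρp hρp (hKsub hs)
  have hintR : IntervalIntegrable (fun τ => 2 * Cg * (L * (τ - ρp))) volume ρp s := by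
    apply ContinuousOn.intervalIntegrable
    fun_prop
  have hmono : (∫ τ in ρp..s, 2 * g τ * Hfun p μ a b ρp φp τ)
      ≤ ∫ τ in ρp..s, 2 * Cg * (L * (τ - ρp)) := by
    apply intervalIntegral.integral_mono_on hs.1 hintL hintR
    intro x hx
    have hxK : x ∈ Set.Icc ρp ρm := ⟨hx.1, hx.2.trans hs.2⟩
    have hH0 : 0 ≤ Hfun p μ a b ρp φp x := by
      rcases eq_or_lt_of_le hx.1 with h | h
      · rw [← h, Hρp hcomp]
      · exact (Hpos hμ ha hb hp3 hp' hρp hcomp h).le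
    have h2 : Hfun p μ a b ρp φp x ≤ L * (x - ρp) := hHbound x hxK
    have h3 : 2 * g x ≤ 2 * Cg := by linarith [hgle x hxK]
    calc 2 * g x * Hfun p μ a b ρp φp x ≤ 2 * Cg * Hfun p μ a b ρp φp x :=
          mul_le_mul_of_nonneg_right h3 hH0
      _ ≤ 2 * Cg * (L * (x - ρp)) := mul_le_mul_of_nonneg_left h2 (by positivity)
  have hcalc : (∫ τ in ρp..s, 2 * Cg * (L * (τ - ρp))) = Cg * L * (s - ρp)^2 := by
    rw [intervalIntegral.integral_const_mul]
    rw [intervalIntegral.integral_const_mul]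
    have : (∫ τ in ρp..s, (τ - ρp)) = (s - ρp)^2 / 2 := by
      have := intervalIntegral.integral_comp_sub_right (a := ρp) (b := s) (fun x => x) ρp
      rw [this, integral_id]
      ring_nf
    rw [this]; ring
  rw [hGs]
  calc (∫ τ in ρp..s, 2 * g τ * Hfun p μ a b ρp φp τ)
      ≤ ∫ τ in ρp..s, 2 * Cg * (L * (τ - ρp)) := hmono
    _ = Cg * L * (s - ρp)^2 := hcalc


lemma Xlarge (hμ : 0 < μ) (ha : 0 < a) (hb : 0 < b)
    (hp3 : ContDiffOn ℝ 3 p (Set.Ioi 0))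
    (hp' : ∀ ρ : ℝ, 0 < ρ → a * μ / b * ρ < deriv p ρ) (hρp : 0 < ρp)
    (hcomp : a * ρp = b * φp) (hρpm : ρp < ρm) (C : ℝ) :
    ∃ r : ℝ, ρp < r ∧ r < ρm ∧ C < Xfun p μ a b ρp φp ρm r := by
  obtain ⟨Cq, m, hCq, hmpos, hGle, hgge⟩ := Gquad hμ ha hb hp3 hp' hρp hcomp hρpm
  set g : ℝ → ℝ := fun s => deriv p s / (μ * s) with hgdef
  set c : ℝ := m / Real.sqrt Cq with hc
  have hcpos : 0 < c := div_pos hmpos (Real.sqrt_pos.2 hCq)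
  -- pointwise lower bound for ψ
  have hpsige : ∀ s ∈ Set.Ioc ρp ρm, c * (s - ρp)⁻¹ ≤ psif p μ a b ρp φp s := by
    intro s hs
    have hs0 : 0 < s - ρp := sub_pos.2 hs.1
    have hGpos : 0 < Gfun p μ a b ρp φp s := Gpos hμ ha hb hp3 hp' hρp hcomp hs.1
    have hsqle : Real.sqrt (Gfun p μ a b ρp φp s) ≤ Real.sqrt Cq * (s - ρp) := by
      have h1 := Real.sqrt_le_sqrt (hGle s ⟨hs.1.le, hs.2⟩)
      rwa [Real.sqrt_mul hCq.le, Real.sqrt_sq hs0.le] at h1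
    have hdiv : m / (Real.sqrt Cq * (s - ρp)) ≤ g s / Real.sqrt (Gfun p μ a b ρp φp s) := by
      apply div_le_div₀ (gpos hμ ha hb hp' (hρp.trans hs.1)).le
        (hgge s ⟨hs.1.le, hs.2⟩) (Real.sqrt_pos.2 hGpos) hsqle
    have heq : m / (Real.sqrt Cq * (s - ρp)) = c * (s - ρp)⁻¹ := by
      rw [hc]; field_simp
    rw [← heq]
    exact hdiv
  -- choose r
  set E : ℝ := max (C / c + 1) 1 with hE
  have hEpos : 0 < E := lt_of_lt_of_le one_pos (le_max_right _ _)
  set r : ℝ := ρp + (ρm - ρp) * Real.exp (-E) with hr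
  have hrsub : r - ρp = (ρm - ρp) * Real.exp (-E) := by rw [hr]; ring
  have hρpr : ρp < r := by
    rw [hr]
    have : 0 < (ρm - ρp) * Real.exp (-E) := mul_pos (sub_pos.2 hρpm) (Real.exp_pos _)
    linarith
  have hrρm : r < ρm := by
    rw [hr]
    have h1 : Real.exp (-E) < 1 := Real.exp_lt_one_iff.2 (by linarith)
    nlinarith [sub_pos.2 hρpm]
  refine ⟨r, hρpr, hrρm, ?_⟩
  -- X r = ∫_r^ρm ψ
  have hXr : Xfun p μ a b ρp φp ρm r = ∫ τ in r..ρm, psif p μ a b ρp φp τ := by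
    unfold Xfun
    rw [← intervalIntegral.integral_symm]
  have hintψ : IntervalIntegrable (psif p μ a b ρp φp) volume r ρm :=
    psiinteg hμ ha hb hp3 hp' hρp hcomp hρpr hρpm
  have hintc : IntervalIntegrable (fun s => c * (s - ρp)⁻¹) volume r ρm := by
    apply ContinuousOn.intervalIntegrable
    apply continuousOn_const.mul
    apply ContinuousOn.inv₀ (by fun_prop)
    intro x hx
    rw [Set.uIcc_of_le hrρm.le] at hx
    have : ρp < x := lt_of_lt_of_le hρpr hx.1
    exact ne_of_gt (sub_pos.2 this)
  have hmono : (∫ s in r..ρm, c * (s - ρp)⁻¹) ≤ ∫ τ in r..ρm, psif p μ a b ρp φp τ := by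
    apply intervalIntegral.integral_mono_on hrρm.le hintc hintψ
    intro x hx
    exact hpsige x ⟨lt_of_lt_of_le hρpr hx.1, hx.2⟩
  have hcalc : (∫ s in r..ρm, c * (s - ρp)⁻¹) = c * E := by
    rw [intervalIntegral.integral_const_mul]
    have h1 := intervalIntegral.integral_comp_sub_right (a := r) (b := ρm) (fun x => x⁻¹) ρp
    rw [h1, integral_inv_of_pos
      (by rw [hrsub]; exact mul_pos (sub_pos.2 hρpm) (Real.exp_pos _)) (sub_pos.2 hρpm)]
    have h2 : (ρm - ρp) / (r - ρp) = Real.exp E := by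
      rw [hrsub, Real.exp_neg]
      field_simp [sub_ne_zero.2 (ne_of_gt hρpm)]
    rw [h2, Real.log_exp]
  have hfin : C < c * E := by
    have h1 : C / c + 1 ≤ E := le_max_left _ _
    have h2 : c * (C / c + 1) ≤ c * E := mul_le_mul_of_nonneg_left h1 hcpos.le
    have h3 : c * (C / c + 1) = C + c := by field_simp
    linarith
  rw [hXr]
  linarith [hmono, hfin, hcalc]


lemma psiD (hμ : 0 < μ) (ha : 0 < a) (hb : 0 < b)
    (hp3 : ContDiffOn ℝ 3 p (Set.Ioi 0))
    (hp' : ∀ ρ : ℝ, 0 < ρ → a * μ / b * ρ < deriv p ρ) (hρp : 0 < ρp)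
    (hcomp : a * ρp = b * φp) {r : ℝ} (hr : ρp < r) :
    -(psif p μ a b ρp φp r) * Dfun p μ a b ρp φp r = 1 := by
  have hr0 : (0:ℝ) < r := hρp.trans hr
  have hd : deriv p r ≠ 0 := by
    have h1 : 0 < a * μ / b * r := by positivity
    exact (h1.trans (hp' r hr0)).ne'
  have hG := (Real.sqrt_pos.2 (Gpos hμ ha hb hp3 hp' hρp hcomp hr)).ne'
  unfold psif Dfun
  field_simp

lemma Dneg (hμ : 0 < μ) (ha : 0 < a) (hb : 0 < b)
    (hp3 : ContDiffOn ℝ 3 p (Set.Ioi 0))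
    (hp' : ∀ ρ : ℝ, 0 < ρ → a * μ / b * ρ < deriv p ρ) (hρp : 0 < ρp)
    (hcomp : a * ρp = b * φp) {r : ℝ} (hr : ρp < r) :
    Dfun p μ a b ρp φp r < 0 := by
  unfold Dfun
  apply div_neg_of_neg_of_pos
  · exact neg_neg_iff_pos.2 (Real.sqrt_pos.2 (Gpos hμ ha hb hp3 hp' hρp hcomp hr))
  · exact gpos hμ ha hb hp' (hρp.trans hr)

lemma const_aux {k : ℝ → ℝ} {T : ℝ} (hT : 0 ≤ T)
    (hc : ContinuousOn k (Set.Icc 0 T))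
    (hd : ∀ s ∈ Set.Ioo 0 T, HasDerivAt k 0 s) : k T = k 0 := by
  rcases eq_or_lt_of_le hT with h | hTpos
  · rw [← h]
  have key : ∀ s ∈ Set.Ioc 0 T, k T = k s := by
    intro s hs
    have := constant_of_has_deriv_right_zero (f := k) (a := s) (b := T)
      (hc.mono (Set.Icc_subset_Icc hs.1.le le_rfl))
      (fun x hx => (hd x ⟨lt_of_lt_of_le hs.1 hx.1, hx.2⟩).hasDerivWithinAt)
    exact this T ⟨hs.2, le_rfl⟩
  haveI hne : (𝓝[Set.Ioc 0 T] (0:ℝ)).NeBot := by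
    rw [← mem_closure_iff_nhdsWithin_neBot, closure_Ioc (ne_of_lt hTpos)]
    exact ⟨le_rfl, hTpos.le⟩
  have h1 : Tendsto k (𝓝[Set.Ioc 0 T] 0) (𝓝 (k 0)) :=
    (hc.continuousWithinAt ⟨le_rfl, hT⟩).mono_left (nhdsWithin_mono _ Set.Ioc_subset_Icc_self)
  have h2 : Tendsto k (𝓝[Set.Ioc 0 T] 0) (𝓝 (k T)) := by
    apply Tendsto.congr' _ tendsto_const_nhds
    filter_upwards [self_mem_nhdsWithin] with x hx
    exact key x hx
  exact tendsto_nhds_unique h2 h1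

lemma Xcont (hμ : 0 < μ) (ha : 0 < a) (hb : 0 < b)
    (hp3 : ContDiffOn ℝ 3 p (Set.Ioi 0))
    (hp' : ∀ ρ : ℝ, 0 < ρ → a * μ / b * ρ < deriv p ρ) (hρp : 0 < ρp)
    (hcomp : a * ρp = b * φp) (hρpm : ρp < ρm) :
    ContinuousOn (Xfun p μ a b ρp φp ρm) (Set.Ioi ρp) := fun r hr =>
  ((hasDerivX hμ ha hb hp3 hp' hρp hcomp hρpm hr).continuousAt).continuousWithinAt

lemma sol_eq (hμ : 0 < μ) (ha : 0 < a) (hb : 0 < b)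
    (hp3 : ContDiffOn ℝ 3 p (Set.Ioi 0))
    (hp' : ∀ ρ : ℝ, 0 < ρ → a * μ / b * ρ < deriv p ρ) (hρp : 0 < ρp)
    (hcomp : a * ρp = b * φp) (hρpm : ρp < ρm) {ρ : ℝ → ℝ}
    (hcont : ContinuousOn ρ (Set.Ici 0)) (h0 : ρ 0 = ρm)
    (hode : ∀ x : ℝ, 0 < x → HasDerivAt ρ (Dfun p μ a b ρp φp (ρ x)) x) :
    ∀ t : ℝ, 0 ≤ t → ρp < ρ t ∧ Xfun p μ a b ρp φp ρm (ρ t) = t := by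
  have claim1 : ∀ T : ℝ, 0 ≤ T → (∀ s ∈ Set.Icc (0:ℝ) T, ρp < ρ s) →
      Xfun p μ a b ρp φp ρm (ρ T) = T := by
    intro T hT hin
    set k : ℝ → ℝ := fun s => Xfun p μ a b ρp φp ρm (ρ s) - s with hk
    have hkc : ContinuousOn k (Set.Icc 0 T) := by
      apply ContinuousOn.sub _ continuousOn_id
      apply (Xcont hμ ha hb hp3 hp' hρp hcomp hρpm).comp
        (hcont.mono (fun x hx => hx.1)) hin
    have hkd : ∀ s ∈ Set.Ioo (0:ℝ) T, HasDerivAt k 0 s := by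
      intro s hs
      have hρs : ρp < ρ s := hin s ⟨hs.1.le, hs.2.le⟩
      have hX := hasDerivX hμ ha hb hp3 hp' hρp hcomp hρpm hρs
      have hc2 : HasDerivAt (fun t => Xfun p μ a b ρp φp ρm (ρ t))
          (-(psif p μ a b ρp φp (ρ s)) * Dfun p μ a b ρp φp (ρ s)) s :=
        hX.comp s (hode s hs.1)
      rw [psiD hμ ha hb hp3 hp' hρp hcomp hρs] at hc2
      have := hc2.sub (hasDerivAt_id s)
      rw [sub_self] at this
      exact this
    have := const_aux hT hkc hkd
    simp only [hk, h0, Xρm] at this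
    linarith [this]
  have claim2 : ∀ t : ℝ, 0 ≤ t → ρp < ρ t := by
    intro t ht
    by_contra hcon
    push_neg at hcon
    set S : Set ℝ := {s | 0 ≤ s ∧ ρ s ≤ ρp} with hS
    have hne : S.Nonempty := ⟨t, ht, hcon⟩
    have hbdd : BddBelow S := ⟨0, fun x hx => hx.1⟩
    have hSclosed : IsClosed S := by
      have : S = Set.Ici 0 ∩ ρ ⁻¹' (Set.Iic ρp) := rfl
      rw [this]
      exact hcont.preimage_isClosed_of_isClosed isClosed_Ici isClosed_Iic
    set t₁ : ℝ := sInf S with ht₁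
    have ht₁S : t₁ ∈ S := hSclosed.csInf_mem hne hbdd
    have ht₁pos : 0 < t₁ := by
      rcases eq_or_lt_of_le ht₁S.1 with h | h
      · exfalso; have := ht₁S.2; rw [← h, h0] at this; linarith
      · exact h
    have hlt : ∀ s : ℝ, 0 ≤ s → s < t₁ → ρp < ρ s := by
      intro s hs0 hst
      by_contra hc
      push_neg at hc
      exact absurd (csInf_le hbdd ⟨hs0, hc⟩) (not_le.2 hst)
    obtain ⟨rs, hr1, hr2, hr3⟩ := Xlarge hμ ha hb hp3 hp' hρp hcomp hρpm t₁
    -- find s < t₁ with ρ s < rs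
    haveI hnb : (𝓝[Set.Ico 0 t₁] t₁).NeBot := by
      rw [← mem_closure_iff_nhdsWithin_neBot, closure_Ico (ne_of_lt ht₁pos)]
      exact ⟨ht₁pos.le, le_rfl⟩
    have htend : Tendsto ρ (𝓝[Set.Ico 0 t₁] t₁) (𝓝 (ρ t₁)) :=
      (hcont.continuousWithinAt (Set.mem_Ici.2 ht₁S.1)).mono_left
        (nhdsWithin_mono _ (fun x hx => hx.1))
    have hev : ∀ᶠ s in 𝓝[Set.Ico 0 t₁] t₁, ρ s < rs :=
      htend.eventually_lt_const (lt_of_le_of_lt ht₁S.2 hr1)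
    obtain ⟨s, hsrs, hsI⟩ := (hev.and self_mem_nhdsWithin).exists
    have hρsp : ρp < ρ s := hlt s hsI.1 hsI.2
    have hXs : Xfun p μ a b ρp φp ρm (ρ s) = s :=
      claim1 s hsI.1 (fun u hu => hlt u hu.1 (lt_of_le_of_lt hu.2 hsI.2))
    have : Xfun p μ a b ρp φp ρm rs < Xfun p μ a b ρp φp ρm (ρ s) :=
      Xanti hμ ha hb hp3 hp' hρp hcomp hρpm hρsp hr1 hsrs
    linarith [hsI.2]
  intro t ht
  exact ⟨claim2 t ht, claim1 t ht (fun s hs => claim2 s hs.1)⟩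


lemma exists_inv (hμ : 0 < μ) (ha : 0 < a) (hb : 0 < b)
    (hp3 : ContDiffOn ℝ 3 p (Set.Ioi 0))
    (hp' : ∀ ρ : ℝ, 0 < ρ → a * μ / b * ρ < deriv p ρ) (hρp : 0 < ρp)
    (hcomp : a * ρp = b * φp) (hρpm : ρp < ρm) (y : ℝ) :
    ∃ r : ℝ, (ρp < r ∧ r ≤ ρm) ∧ Xfun p μ a b ρp φp ρm r = max y 0 := by
  obtain ⟨r₀, hr₀1, hr₀2, hr₀3⟩ := Xlarge hμ ha hb hp3 hp' hρp hcomp hρpm (max y 0)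
  have hcX : ContinuousOn (Xfun p μ a b ρp φp ρm) (Set.Icc r₀ ρm) :=
    (Xcont hμ ha hb hp3 hp' hρp hcomp hρpm).mono (fun x hx => lt_of_lt_of_le hr₀1 hx.1)
  have hsub := intermediate_value_Icc' hr₀2.le hcX
  have hy : max y 0 ∈ Set.Icc (Xfun p μ a b ρp φp ρm ρm) (Xfun p μ a b ρp φp ρm r₀) := by
    rw [Xρm]
    exact ⟨le_max_right _ _, hr₀3.le⟩
  obtain ⟨r, hrI, hXr⟩ := hsub hy
  exact ⟨r, ⟨lt_of_lt_of_le hr₀1 hrI.1, hrI.2⟩, hXr⟩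

lemma Xantitone (hμ : 0 < μ) (ha : 0 < a) (hb : 0 < b)
    (hp3 : ContDiffOn ℝ 3 p (Set.Ioi 0))
    (hp' : ∀ ρ : ℝ, 0 < ρ → a * μ / b * ρ < deriv p ρ) (hρp : 0 < ρp)
    (hcomp : a * ρp = b * φp) (hρpm : ρp < ρm) {r₁ r₂ : ℝ}
    (h1 : ρp < r₁) (h2 : ρp < r₂) (h12 : r₁ ≤ r₂) :
    Xfun p μ a b ρp φp ρm r₂ ≤ Xfun p μ a b ρp φp ρm r₁ := by
  rcases eq_or_lt_of_le h12 with h | h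
  · rw [h]
  · exact (Xanti hμ ha hb hp3 hp' hρp hcomp hρpm h1 h2 h).le


end Stmt19

open Stmt19 in
/-- When `φ₋ > φ₊` (so `ρ₋ > ρ₊`), the initial value problem `ρ̄' = 𝒟(ρ̄)` on `(0,∞)`,
`ρ̄(0) = ρ₋`, has a unique global solution on `[0,∞)`; it satisfies
`ρ₊ < ρ̄(x) ≤ ρ₋` and `ρ̄'(x) < 0` for `x > 0`, and `ρ̄(x) → ρ₊` as `x → +∞`. -/
theorem stmt19 (p : ℝ → ℝ) (μ a b ρp φp φm ρm : ℝ)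
    (hμ : 0 < μ) (ha : 0 < a) (hb : 0 < b)
    (hp3 : ContDiffOn ℝ 3 p (Set.Ioi 0))
    (hp' : ∀ ρ : ℝ, 0 < ρ → a * μ / b * ρ < deriv p ρ)
    (hρp : 0 < ρp) (hφp : 0 < φp) (hcomp : a * ρp = b * φp)
    (hφ : φp < φm) (hint : CondPlus p μ ρp φp φm)
    (hρm : 0 < ρm) (hFρm : Ffun p μ ρp ρm = φm - φp) :
    ρp < ρm ∧
    (∃ ρb : ℝ → ℝ,
      (ContinuousOn ρb (Set.Ici 0) ∧ ρb 0 = ρm ∧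
        (∀ x : ℝ, 0 < x → HasDerivAt ρb (Dfun p μ a b ρp φp (ρb x)) x)) ∧
      (∀ x : ℝ, 0 < x → ρp < ρb x ∧ ρb x ≤ ρm ∧ deriv ρb x < 0) ∧
      Tendsto ρb atTop (nhds ρp)) ∧
    (∀ ρ1 ρ2 : ℝ → ℝ,
      (ContinuousOn ρ1 (Set.Ici 0) ∧ ρ1 0 = ρm ∧
        (∀ x : ℝ, 0 < x → HasDerivAt ρ1 (Dfun p μ a b ρp φp (ρ1 x)) x)) →
      (ContinuousOn ρ2 (Set.Ici 0) ∧ ρ2 0 = ρm ∧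
        (∀ x : ℝ, 0 < x → HasDerivAt ρ2 (Dfun p μ a b ρp φp (ρ2 x)) x)) →
      Set.EqOn ρ1 ρ2 (Set.Ici 0)) := by
  -- ρp < ρm
  have hρpm : ρp < ρm := by
    have hF0 : Ffun p μ ρp ρp = 0 := intervalIntegral.integral_same
    have := (Fmono hμ ha hb hp3 hp' hρp).lt_iff_lt (Set.mem_Ioi.2 hρp) (Set.mem_Ioi.2 hρm)
    rw [← this, hF0, hFρm]
    linarith
  have hXanti := Xanti hμ ha hb hp3 hp' hρp hcomp hρpm
  have hXat : ∀ {r₁ r₂ : ℝ}, ρp < r₁ → ρp < r₂ → r₁ ≤ r₂ → Xfun p μ a b ρp φp ρm r₂ ≤ Xfun p μ a b ρp φp ρm r₁ :=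
    fun h1 h2 h12 => Xantitone hμ ha hb hp3 hp' hρp hcomp hρpm h1 h2 h12
  -- construct the inverse function
  choose ρb hρb1 hρb2 using exists_inv hμ ha hb hp3 hp' hρp hcomp hρpm
  have hXρb : ∀ y : ℝ, 0 ≤ y → Xfun p μ a b ρp φp ρm (ρb y) = y := by
    intro y hy; rw [hρb2 y, max_eq_left hy]
  have hρb0 : ρb 0 = ρm := by
    apply hXanti.injOn (Set.mem_Ioi.2 (hρb1 0).1) (Set.mem_Ioi.2 hρpm)
    rw [hXρb 0 le_rfl, Xρm]
  -- continuity at positive points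
  have hcontAt : ∀ x : ℝ, 0 < x → ContinuousAt ρb x := by
    intro x hx
    set r := ρb x with hrdef
    have hr : ρp < r := (hρb1 x).1
    have hrm : r ≤ ρm := (hρb1 x).2
    have hXr : Xfun p μ a b ρp φp ρm r = x := hXρb x hx.le
    have hrltm : r < ρm := by
      rcases eq_or_lt_of_le hrm with h | h
      · exfalso; rw [h] at hXr; rw [Xρm] at hXr; linarith
      · exact h
    rw [Metric.continuousAt_iff]
    intro ε hε
    set r₁ : ℝ := max (r - ε/2) ((ρp + r)/2) with hr₁def
    set r₂ : ℝ := min (r + ε/2) ((r + ρm)/2) with hr₂def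
    have hρpr₁ : ρp < r₁ := lt_of_lt_of_le (by linarith) (le_max_right _ _)
    have hr₁r : r₁ < r := max_lt (by linarith) (by linarith)
    have hrr₂ : r < r₂ := lt_min (by linarith) (by linarith)
    have hr₂m : r₂ < ρm := lt_of_le_of_lt (min_le_right _ _) (by linarith)
    have hXr₁ : x < Xfun p μ a b ρp φp ρm r₁ := by
      rw [← hXr]; exact hXanti (Set.mem_Ioi.2 hρpr₁) (Set.mem_Ioi.2 hr) hr₁r
    have hXr₂lt : Xfun p μ a b ρp φp ρm r₂ < x := by
      rw [← hXr]; exact hXanti (Set.mem_Ioi.2 hr) (Set.mem_Ioi.2 (hr.trans hrr₂)) hrr₂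
    have hXr₂pos : 0 < Xfun p μ a b ρp φp ρm r₂ := by
      have := hXanti (Set.mem_Ioi.2 (hr.trans hrr₂)) (Set.mem_Ioi.2 hρpm) hr₂m
      rwa [Xρm] at this
    refine ⟨min (Xfun p μ a b ρp φp ρm r₁ - x) (x - Xfun p μ a b ρp φp ρm r₂), lt_min (by linarith) (by linarith), ?_⟩
    intro y hy
    rw [Real.dist_eq, abs_lt] at hy
    have hy1 : y < Xfun p μ a b ρp φp ρm r₁ := by
      have := hy.2.trans_le (min_le_left _ _); linarith
    have hy2 : Xfun p μ a b ρp φp ρm r₂ < y := by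
      have h3 := min_le_right (Xfun p μ a b ρp φp ρm r₁ - x) (x - Xfun p μ a b ρp φp ρm r₂)
      linarith [hy.1]
    have hypos : 0 < y := hXr₂pos.trans hy2
    have hXy : Xfun p μ a b ρp φp ρm (ρb y) = y := hXρb y hypos.le
    have hby1 : r₁ < ρb y := by
      by_contra hc
      push_neg at hc
      have := hXat (hρb1 y).1 hρpr₁ hc
      linarith [hXy ▸ this]
    have hby2 : ρb y < r₂ := by
      by_contra hc
      push_neg at hc
      have := hXat (hr.trans hrr₂) (hρb1 y).1 hc
      linarith [hXy ▸ this]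
    rw [Real.dist_eq, abs_lt]
    constructor
    · have : r - ε/2 ≤ r₁ := le_max_left _ _
      linarith
    · have : r₂ ≤ r + ε/2 := min_le_left _ _
      linarith
  -- continuity on Ici 0
  have hcont : ContinuousOn ρb (Set.Ici 0) := by
    intro x hx
    rcases eq_or_lt_of_le (Set.mem_Ici.1 hx) with h | h
    · -- continuity within at 0
      rw [← h]
      rw [ContinuousWithinAt, Metric.tendsto_nhdsWithin_nhds]
      intro ε hε
      set r₁ : ℝ := max (ρm - ε/2) ((ρp + ρm)/2) with hr₁def
      have hρpr₁ : ρp < r₁ := lt_of_lt_of_le (by linarith) (le_max_right _ _)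
      have hr₁m : r₁ < ρm := max_lt (by linarith) (by linarith)
      have hXr₁pos : 0 < Xfun p μ a b ρp φp ρm r₁ := by
        have := hXanti (Set.mem_Ioi.2 hρpr₁) (Set.mem_Ioi.2 hρpm) hr₁m
        rwa [Xρm] at this
      refine ⟨Xfun p μ a b ρp φp ρm r₁, hXr₁pos, ?_⟩
      intro y hy hdy
      rw [Real.dist_eq, abs_lt] at hdy
      have hy0 : 0 ≤ y := hy
      have hy1 : y < Xfun p μ a b ρp φp ρm r₁ := by linarith [hdy.2]
      have hXy : Xfun p μ a b ρp φp ρm (ρb y) = y := hXρb y hy0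
      have hby1 : r₁ < ρb y := by
        by_contra hc
        push_neg at hc
        have := hXat (hρb1 y).1 hρpr₁ hc
        linarith [hXy ▸ this]
      rw [hρb0, Real.dist_eq, abs_lt]
      have h1 : ρm - ε/2 ≤ r₁ := le_max_left _ _
      have h2 : ρb y ≤ ρm := (hρb1 y).2
      constructor <;> linarith
    · exact (hcontAt x h).continuousWithinAt
  -- derivative
  have hderiv : ∀ x : ℝ, 0 < x → HasDerivAt ρb (Dfun p μ a b ρp φp (ρb x)) x := by
    intro x hx
    set r := ρb x with hrdef
    have hr : ρp < r := (hρb1 x).1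
    have hψ : -(psif p μ a b ρp φp r) ≠ 0 :=
      neg_ne_zero.2 (psipos hμ ha hb hp3 hp' hρp hcomp hr).ne'
    have hfg : ∀ᶠ y in 𝓝 x, Xfun p μ a b ρp φp ρm (ρb y) = y := by
      filter_upwards [Ioi_mem_nhds hx] with y hy
      exact hXρb y (le_of_lt hy)
    have h1 : HasDerivAt ρb (-(psif p μ a b ρp φp r))⁻¹ x :=
      HasDerivAt.of_local_left_inverse (hcontAt x hx)
        (hasDerivX hμ ha hb hp3 hp' hρp hcomp hρpm hr) hψ hfg
    have h2 : Dfun p μ a b ρp φp r = (-(psif p μ a b ρp φp r))⁻¹ :=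
      eq_inv_of_mul_eq_one_right (by
        have := psiD hμ ha hb hp3 hp' hρp hcomp hr
        linarith [this])
    rw [← h2] at h1
    exact h1
  -- limit at infinity
  have htendsto : Tendsto ρb atTop (nhds ρp) := by
    have hanti : Antitone ρb := by
      intro y₁ y₂ h12
      by_contra hc
      push_neg at hc
      have h1 : Xfun p μ a b ρp φp ρm (ρb y₂) < Xfun p μ a b ρp φp ρm (ρb y₁) :=
        hXanti (Set.mem_Ioi.2 (hρb1 y₁).1) (Set.mem_Ioi.2 (hρb1 y₂).1) hc
      rw [hρb2 y₁, hρb2 y₂] at h1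
      have := max_le_max h12 (le_refl (0:ℝ))
      linarith
    have hbdd : BddBelow (Set.range ρb) := ⟨ρp, fun z hz => by
      obtain ⟨y, hy⟩ := hz; rw [← hy]; exact (hρb1 y).1.le⟩
    have htd := tendsto_atTop_ciInf hanti hbdd
    have hL : ⨅ y, ρb y = ρp := by
      have hLge : ρp ≤ ⨅ y, ρb y := le_ciInf (fun y => (hρb1 y).1.le)
      rcases eq_or_lt_of_le hLge with h | h
      · exact h.symm
      · exfalso
        set L := ⨅ y, ρb y with hLdef
        have hLm : L ≤ ρm := by
          have := ciInf_le hbdd 0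
          rw [hρb0] at this; exact this
        have hXL0 : 0 ≤ Xfun p μ a b ρp φp ρm L := by
          have := hXat h hρpm hLm
          rwa [Xρm] at this
        set y := Xfun p μ a b ρp φp ρm L + 1 with hydef
        have hy0 : 0 < y := by linarith
        have h1 : L ≤ ρb y := ciInf_le hbdd y
        have h2 : Xfun p μ a b ρp φp ρm (ρb y) ≤ Xfun p μ a b ρp φp ρm L := hXat h (hρb1 y).1 h1
        rw [hXρb y hy0.le] at h2
        linarith
    rwa [hL] at htd
  refine ⟨hρpm, ⟨ρb, ⟨hcont, hρb0, hderiv⟩, ?_, htendsto⟩, ?_⟩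
  · intro x hx
    refine ⟨(hρb1 x).1, (hρb1 x).2, ?_⟩
    rw [(hderiv x hx).deriv]
    exact Dneg hμ ha hb hp3 hp' hρp hcomp (hρb1 x).1
  · rintro ρ1 ρ2 ⟨hc1, h01, hd1⟩ ⟨hc2, h02, hd2⟩ t ht
    have e1 := sol_eq hμ ha hb hp3 hp' hρp hcomp hρpm hc1 h01 hd1 t ht
    have e2 := sol_eq hμ ha hb hp3 hp' hρp hcomp hρpm hc2 h02 hd2 t ht
    apply hXanti.injOn (Set.mem_Ioi.2 e1.1) (Set.mem_Ioi.2 e2.1)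
    rw [e1.2, e2.2]


end
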